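/- Invertibility of the deformed degree-zero superconnection term. Let V be a finite-dimensional complex inner product space, A : V → V a self-adjoint linear operator, and W ⊆ V a subspace with A(W) ⊆ W and ker A ⊆ W; let pᵂ : V → W denote the orthogonal projection and iᵂ : W → V the inclusion. Then for every real s ≠ 0 the linear endomorphism of V × W given by (x, w) ↦ (A x + s·iᵂ(w), s·pᵂ(x)) is bijective. (This is the invertibility, for s > 0, of the block operator 𝔸_λ(s)^{[0]} = [[𝔸^{[0]}, s·i_λ],[s·p^λ, 0]] appearing in the construction of the index bundle, where W is the sum of eigenspaces of 𝔸^{[0]} with eigenvalue below λ.) -/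

import Mathlib

/-- **Invertibility of the deformed degree-zero superconnection term.**
Let `V` be a finite-dimensional complex inner product space, `A : V → V` a self-adjoint
linear operator, and `W ⊆ V` an `A`-invariant subspace containing `ker A`; let `pᵂ` denote the
orthogonal projection onto `W` and `iᵂ` the inclusion. Then for every real `s ≠ 0` the linear
endomorphism of `V × W` given by `(x, w) ↦ (A x + s·iᵂ(w), s·pᵂ(x))` is bijective. -/
theorem deformed_degree_zero_invertible
    {V : Type*} [NormedAddCommGroup V] [InnerProductSpace ℂ V] [FiniteDimensional ℂ V]
    (A : V →ₗ[ℂ] V) (hA : A.IsSymmetric)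
    (W : Submodule ℂ V) (hAW : ∀ x ∈ W, A x ∈ W) (hker : LinearMap.ker A ≤ W)
    (s : ℝ) (hs : s ≠ 0) :
    Function.Bijective (fun p : V × W =>
      ((A p.1 + (s : ℂ) • (p.2 : V), (s : ℂ) • W.orthogonalProjectionOnto p.1) : V × W)) := by
  have hsc : (s : ℂ) ≠ 0 := by exact_mod_cast hs
  set L : V × W →ₗ[ℂ] V × W :=
    ((A.comp (LinearMap.fst ℂ V W)) + (s : ℂ) • (W.subtype.comp (LinearMap.snd ℂ V W))).prod
      ((s : ℂ) • ((W.orthogonalProjectionOnto).toLinearMap.comp (LinearMap.fst ℂ V W))) with hL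
  have hfun : (fun p : V × W =>
      ((A p.1 + (s : ℂ) • (p.2 : V), (s : ℂ) • W.orthogonalProjectionOnto p.1) : V × W)) = L := by
    ext p <;> simp [hL]
  rw [hfun]
  rw [Function.Bijective, ← LinearMap.injective_iff_surjective, and_self]
  rw [injective_iff_map_eq_zero]
  rintro ⟨x, w⟩ h
  simp only [hL, Prod.ext_iff, LinearMap.prod_apply, LinearMap.add_apply, LinearMap.comp_apply,
    LinearMap.smul_apply, LinearMap.fst_apply, LinearMap.snd_apply, Submodule.coe_subtype,
    Function.prod, Prod.mk_eq_zero, Prod.fst_zero, Prod.snd_zero, ContinuousLinearMap.coe_coe, smul_eq_zero, hsc, false_or] at h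
  obtain ⟨h1, h2⟩ := h
  have hxperp : x ∈ Wᗮ := Submodule.orthogonalProjectionOnto_eq_zero_iff.mp h2
  have hAxperp : A x ∈ Wᗮ := by
    intro y hy
    rw [← hA y x]
    exact hxperp (A y) (hAW y hy)
  have hAxW : A x ∈ W := by
    have : A x = -((s : ℂ) • (w : V)) := by
      rw [eq_neg_iff_add_eq_zero]; exact h1
    rw [this]
    exact neg_mem (W.smul_mem _ w.2)
  have hAx0 : A x = 0 := by
    have := Wᗮ.inf_orthogonal_eq_bot
    exact (Submodule.mem_bot ℂ).mp (by
      rw [← W.inf_orthogonal_eq_bot]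
      exact ⟨hAxW, hAxperp⟩)
  have hw : (w : V) = 0 := by
    have : (s : ℂ) • (w : V) = 0 := by rw [← h1, hAx0, zero_add]
    exact (smul_eq_zero.mp this).resolve_left hsc
  have hx : x = 0 := by
    have hxW : x ∈ W := hker (by simpa [LinearMap.mem_ker] using hAx0)
    exact (Submodule.mem_bot ℂ).mp (by rw [← W.inf_orthogonal_eq_bot]; exact ⟨hxW, hxperp⟩)
  exact Prod.ext hx (Subtype.ext hw)
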